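/- For every a > 0, ∫₀^∞ ( J₀(ar) − cos r ) / r dr = ln(2/a), the integral understood as lim_{ε→0, N→∞} ∫_ε^N. -/

import Mathlib

open Filter Set Topology

/-- The Bessel function of the first kind of order zero,
`J₀(t) = ∑_{k≥0} (−1)^k (t/2)^{2k} / (k!)²`. -/
noncomputable def J0 (t : ℝ) : ℝ :=
  ∑' k : ℕ, (-1) ^ k / ((Nat.factorial k : ℝ) ^ 2) * (t / 2) ^ (2 * k)

open MeasureTheory intervalIntegral Real
open scoped Interval

lemma wallis_prod (k : ℕ) :
    ∏ i ∈ Finset.range k, (2 * (i : ℝ) + 1) / (2 * i + 2)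
      = (Nat.factorial (2 * k) : ℝ) / (4 ^ k * (Nat.factorial k : ℝ) ^ 2) := by
  induction k with
  | zero => simp
  | succ k ih =>
    rw [Finset.prod_range_succ, ih]
    have h1 : (2 * (k + 1)) = (2 * k) + 1 + 1 := by ring
    rw [h1, Nat.factorial_succ, Nat.factorial_succ, Nat.factorial_succ]
    push_cast
    have hk : (Nat.factorial k : ℝ) ≠ 0 := Nat.cast_ne_zero.2 (Nat.factorial_ne_zero k)
    have h4 : (4 : ℝ) ^ k ≠ 0 := by positivity
    field_simp
    ring

lemma sin_pow_half (n : ℕ) :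
    ∫ x in (0:ℝ)..(π/2), Real.sin x ^ n = ∫ x in (π/2)..π, Real.sin x ^ n := by
  have := intervalIntegral.integral_comp_sub_left (a := 0) (b := π/2)
    (fun x => Real.sin x ^ n) π
  simp only [Real.sin_pi_sub] at this
  rw [this]
  norm_num [sub_zero]
  ring_nf

lemma integral_sin_pow_even_half (k : ℕ) :
    ∫ x in (0:ℝ)..(π/2), Real.sin x ^ (2 * k)
      = (π / 2) * ((Nat.factorial (2 * k) : ℝ) / (4 ^ k * (Nat.factorial k : ℝ) ^ 2)) := by
  have h2 : (∫ x in (0:ℝ)..π, Real.sin x ^ (2 * k))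
      = (∫ x in (0:ℝ)..(π/2), Real.sin x ^ (2*k)) + ∫ x in (π/2)..π, Real.sin x ^ (2*k) := by
    rw [intervalIntegral.integral_add_adjacent_intervals] <;>
      exact (Real.continuous_sin.pow _).intervalIntegrable _ _
  have h3 := integral_sin_pow_even (n := k)
  rw [wallis_prod] at h3
  have h4 := sin_pow_half (2 * k)
  nlinarith [h2, h3, h4]

lemma J0_repr (t : ℝ) :
    ∫ θ in (0:ℝ)..(π/2), Real.cos (t * Real.sin θ) = (π/2) * J0 t := by
  have hpi : (0:ℝ) ≤ π/2 := by positivity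
  set F : ℕ → ℝ → ℝ := fun k θ => (-1)^k * (t * Real.sin θ)^(2*k) / (Nat.factorial (2*k)) with hF
  have hFc : ∀ k, Continuous (F k) := fun k => by
    simp only [hF]; fun_prop
  have hcos : ∀ θ : ℝ, Real.cos (t * Real.sin θ) = ∑' k, F k θ := fun θ =>
    (Real.hasSum_cos _).tsum_eq.symm
  have hbound : ∀ k θ, ‖F k θ‖ ≤ |t|^(2*k) / (Nat.factorial (2*k)) := by
    intro k θ
    have h1 : |t * Real.sin θ| ≤ |t| := by
      rw [abs_mul]
      calc |t| * |Real.sin θ| ≤ |t| * 1 := by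
            gcongr
            exact abs_le.2 ⟨Real.neg_one_le_sin θ, Real.sin_le_one θ⟩
        _ = |t| := mul_one _
    simp only [hF, Real.norm_eq_abs, abs_div, abs_mul, abs_pow, abs_neg, abs_one, one_pow,
      one_mul, Nat.abs_cast]
    rw [← abs_mul]
    gcongr
  have hint : ∀ k, IntegrableOn (F k) (Ioc 0 (π/2)) volume := fun k =>
    (hFc k).integrableOn_Ioc
  have hinj : Function.Injective (fun k : ℕ => 2*k) := fun a b h => by dsimp at h; omega
  have hsum : Summable fun k => ∫ θ in Ioc (0:ℝ) (π/2), ‖F k θ‖ := by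
    refine Summable.of_nonneg_of_le
      (fun k => MeasureTheory.integral_nonneg (fun θ => norm_nonneg _))
      (fun k => ?_)
      (Summable.mul_left (π/2) ((Real.summable_pow_div_factorial |t|).comp_injective hinj))
    have h1 : ∫ θ in Ioc (0:ℝ) (π/2), ‖F k θ‖
        ≤ (|t|^(2*k) / (Nat.factorial (2*k))) * (volume (Ioc (0:ℝ) (π/2))).toReal := by
      have h0 := MeasureTheory.norm_setIntegral_le_of_norm_le_const
        (μ := volume) (s := Ioc (0:ℝ) (π/2)) (C := |t|^(2*k) / (Nat.factorial (2*k)))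
        (f := fun θ => ‖F k θ‖) measure_Ioc_lt_top
        (fun θ _ => by simpa using hbound k θ)
      calc ∫ θ in Ioc (0:ℝ) (π/2), ‖F k θ‖
          ≤ ‖∫ θ in Ioc (0:ℝ) (π/2), ‖F k θ‖‖ := le_abs_self _
        _ ≤ _ := h0
    have h2 : (volume (Ioc (0:ℝ) (π/2))).toReal = π/2 := by
      simp [Real.volume_Ioc, hpi]
    rw [h2] at h1
    simp only [Function.comp]
    linarith [h1]
  have key : ∫ θ in Ioc (0:ℝ) (π/2), Real.cos (t * Real.sin θ)
      = ∑' k, ∫ θ in Ioc (0:ℝ) (π/2), F k θ := by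
    rw [show (fun θ => Real.cos (t * Real.sin θ)) = fun θ => ∑' k, F k θ from funext hcos]
    exact (MeasureTheory.integral_tsum_of_summable_integral_norm hint hsum).symm
  have hterm : ∀ k, ∫ θ in Ioc (0:ℝ) (π/2), F k θ
      = (π/2) * ((-1)^k / ((Nat.factorial k : ℝ)^2) * (t/2)^(2*k)) := by
    intro k
    have : ∀ θ : ℝ, F k θ = ((-1)^k * t^(2*k) / (Nat.factorial (2*k))) * Real.sin θ ^ (2*k) := by
      intro θ; simp only [hF, mul_pow]; ring
    rw [show (fun θ => F k θ) = fun θ => ((-1)^k * t^(2*k) / (Nat.factorial (2*k))) * Real.sin θ ^ (2*k) from funext this]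
    rw [MeasureTheory.integral_const_mul, ← intervalIntegral.integral_of_le hpi,
      integral_sin_pow_even_half]
    have hfk : (Nat.factorial (2*k) : ℝ) ≠ 0 := Nat.cast_ne_zero.2 (Nat.factorial_ne_zero _)
    have hk : (Nat.factorial k : ℝ) ≠ 0 := Nat.cast_ne_zero.2 (Nat.factorial_ne_zero _)
    have h4 : ((4:ℝ))^k ≠ 0 := by positivity
    have ht2 : (t/2)^(2*k) = t^(2*k) / 4^k := by
      rw [div_pow, pow_mul, pow_mul]; norm_num
    rw [ht2]
    field_simp
  rw [intervalIntegral.integral_of_le hpi, key]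
  rw [show (fun k => ∫ θ in Ioc (0:ℝ) (π/2), F k θ)
      = fun k => (π/2) * ((-1)^k / ((Nat.factorial k : ℝ)^2) * (t/2)^(2*k)) from funext hterm]
  rw [tsum_mul_left]
  rfl

lemma J0_eq (t : ℝ) : J0 t = (2/π) * ∫ θ in (0:ℝ)..(π/2), Real.cos (t * Real.sin θ) := by
  rw [J0_repr]
  have := Real.pi_ne_zero
  field_simp

lemma J0_continuous : Continuous J0 := by
  have h : Continuous fun t : ℝ => ∫ θ in (0:ℝ)..(π/2), Real.cos (t * Real.sin θ) :=
    intervalIntegral.continuous_parametric_intervalIntegral_of_continuous'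
      (f := fun t θ => Real.cos (t * Real.sin θ)) (μ := volume) (by fun_prop) _ _
  have h2 : J0 = fun t => (2/π) * ∫ θ in (0:ℝ)..(π/2), Real.cos (t * Real.sin θ) :=
    funext J0_eq
  rw [h2]; exact continuous_const.mul h

lemma ne_zero_of_uIcc {c d : ℝ} (hc : 0 < c) (hd : 0 < d) :
    ∀ x ∈ [[c, d]], x ≠ 0 := by
  intro x hx
  have : 0 < x := lt_of_lt_of_le (lt_min hc hd) hx.1
  exact this.ne'
lemma cos_div_intervalIntegrable {c d : ℝ} (hc : 0 < c) (hd : 0 < d) :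
    IntervalIntegrable (fun u => Real.cos u / u) volume c d :=
  (Real.continuous_cos.continuousOn.div continuousOn_id
    (ne_zero_of_uIcc hc hd)).intervalIntegrable

lemma one_sub_cos_abs_le (u : ℝ) : |Real.cos u - 1| ≤ u ^ 2 / 2 := by
  have h1 := Real.cos_sq (u/2)
  have h2 := Real.sin_sq_add_cos_sq (u/2)
  have h3 : |Real.sin (u/2)| ≤ |u/2| := Real.abs_sin_le_abs
  have h4 : Real.sin (u/2) ^ 2 ≤ (u/2)^2 := by
    rw [← sq_abs (Real.sin (u/2)), ← sq_abs (u/2)]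
    exact pow_le_pow_left₀ (abs_nonneg _) h3 2
  have h5 : 2 * (u/2) = u := by ring
  rw [h5] at h1
  have h6 : Real.cos u - 1 = -(2 * Real.sin (u/2)^2) := by nlinarith
  rw [h6, abs_neg, abs_of_nonneg (by positivity)]
  nlinarith

lemma tail_bound {c d : ℝ} (hc : 0 < c) (hcd : c ≤ d) :
    |∫ u in c..d, Real.cos u / u| ≤ 3 / c := by
  have hd : 0 < d := hc.trans_le hcd
  have hne := ne_zero_of_uIcc hc hd
  have hu : ∀ x ∈ [[c, d]], HasDerivAt (fun y : ℝ => y⁻¹) (-((x : ℝ) ^ 2)⁻¹) x :=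
    fun x hx => hasDerivAt_inv (hne x hx)
  have hv : ∀ x ∈ [[c, d]], HasDerivAt Real.sin (Real.cos x) x := fun x _ =>
    Real.hasDerivAt_sin x
  have hu' : IntervalIntegrable (fun x : ℝ => -((x:ℝ)^2)⁻¹) volume c d :=
    (((continuousOn_id.pow 2).inv₀ (fun x hx => pow_ne_zero 2 (hne x hx))).neg).intervalIntegrable
  have hparts := intervalIntegral.integral_mul_deriv_eq_deriv_mul hu hv hu'
    (Real.continuous_cos.intervalIntegrable _ _)
  have hcongr : ∫ u in c..d, Real.cos u / u = ∫ x in c..d, x⁻¹ * Real.cos x := by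
    apply intervalIntegral.integral_congr
    intro x _
    show Real.cos x / x = x⁻¹ * Real.cos x
    rw [div_eq_mul_inv, mul_comm]
  have hintsq : IntervalIntegrable (fun x : ℝ => ((x:ℝ)^2)⁻¹) volume c d :=
    ((continuousOn_id.pow 2).inv₀ (fun x hx => pow_ne_zero 2 (hne x hx))).intervalIntegrable
  have hbnd : |∫ x in c..d, -((x:ℝ)^2)⁻¹ * Real.sin x| ≤ |∫ x in c..d, ((x:ℝ)^2)⁻¹| := by
    rw [← Real.norm_eq_abs (∫ x in c..d, -((x:ℝ)^2)⁻¹ * Real.sin x)]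
    apply intervalIntegral.norm_integral_le_abs_of_norm_le _ hintsq
    filter_upwards with x
    have hs : |Real.sin x| ≤ 1 := Real.abs_sin_le_one x
    rw [norm_mul, norm_neg, norm_inv]
    calc ‖((x:ℝ)^2)‖⁻¹ * ‖Real.sin x‖ ≤ ‖((x:ℝ)^2)‖⁻¹ * 1 := by
          gcongr; exact hs
      _ = ‖(x:ℝ)^2‖⁻¹ := mul_one _
      _ = ((x:ℝ)^2)⁻¹ := by rw [Real.norm_eq_abs, abs_of_nonneg (sq_nonneg x)]
  have hsq : ∫ x in c..d, ((x:ℝ)^2)⁻¹ = c⁻¹ - d⁻¹ := by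
    have h0 : (0:ℝ) ∉ [[c, d]] := fun h => (hne 0 h) rfl
    have heq : ∀ x : ℝ, ((x:ℝ)^2)⁻¹ = x ^ (-2 : ℤ) := by
      intro x; rw [zpow_neg, zpow_two, pow_two]
    rw [show (fun x : ℝ => ((x:ℝ)^2)⁻¹) = fun x : ℝ => x ^ (-2:ℤ) from funext heq]
    rw [integral_zpow (Or.inr ⟨by norm_num, h0⟩)]
    norm_num
    ring
  have h1c : c⁻¹ - d⁻¹ ≤ c⁻¹ := by
    have : 0 < d⁻¹ := by positivity
    linarith
  have hsin_d : |Real.sin d| ≤ 1 := Real.abs_sin_le_one d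
  have hsin_c : |Real.sin c| ≤ 1 := Real.abs_sin_le_one c
  rw [hcongr, hparts]
  have hd_inv : d⁻¹ ≤ c⁻¹ := by gcongr
  calc |d⁻¹ * Real.sin d - c⁻¹ * Real.sin c - ∫ x in c..d, -((x:ℝ)^2)⁻¹ * Real.sin x|
      ≤ |d⁻¹ * Real.sin d| + |c⁻¹ * Real.sin c| + |∫ x in c..d, -((x:ℝ)^2)⁻¹ * Real.sin x| := by
        have := abs_sub (d⁻¹ * Real.sin d - c⁻¹ * Real.sin c) (∫ x in c..d, -((x:ℝ)^2)⁻¹ * Real.sin x)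
        have h2 := abs_sub_abs_le_abs_sub (d⁻¹ * Real.sin d) (c⁻¹ * Real.sin c)
        calc |d⁻¹ * Real.sin d - c⁻¹ * Real.sin c - ∫ x in c..d, -((x:ℝ)^2)⁻¹ * Real.sin x|
            ≤ |d⁻¹ * Real.sin d - c⁻¹ * Real.sin c| + |∫ x in c..d, -((x:ℝ)^2)⁻¹ * Real.sin x| :=
              abs_sub _ _
          _ ≤ _ := by
              have := abs_sub (d⁻¹ * Real.sin d) (c⁻¹ * Real.sin c)
              linarith [abs_sub_abs_le_abs_sub (d⁻¹ * Real.sin d) (c⁻¹ * Real.sin c)]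
    _ ≤ c⁻¹ * 1 + c⁻¹ * 1 + c⁻¹ := by
        have e1 : |d⁻¹ * Real.sin d| ≤ c⁻¹ * 1 := by
          rw [abs_mul, abs_of_nonneg (by positivity : (0:ℝ) ≤ d⁻¹)]
          gcongr
        have e2 : |c⁻¹ * Real.sin c| ≤ c⁻¹ * 1 := by
          rw [abs_mul, abs_of_nonneg (by positivity : (0:ℝ) ≤ c⁻¹)]
          gcongr
        have e3 : |∫ x in c..d, -((x:ℝ)^2)⁻¹ * Real.sin x| ≤ c⁻¹ := by
          rw [hsq] at hbnd
          have : |c⁻¹ - d⁻¹| = c⁻¹ - d⁻¹ := abs_of_nonneg (by linarith)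
          rw [this] at hbnd
          linarith
        linarith
    _ = 3 / c := by rw [div_eq_mul_inv]; ring

lemma tail_bound' {c d : ℝ} (hc : 0 < c) (hd : 0 < d) :
    |∫ u in c..d, Real.cos u / u| ≤ 3 / min c d := by
  rcases le_total c d with h | h
  · rw [min_eq_left h]; exact tail_bound hc h
  · rw [min_eq_right h, intervalIntegral.integral_symm, abs_neg]; exact tail_bound hd h

lemma head_eq {c d : ℝ} (hc : 0 < c) (hd : 0 < d) :
    ∫ u in c..d, Real.cos u / u
      = (∫ u in c..d, (Real.cos u - 1) / u) + Real.log (d / c) := by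
  have hne := ne_zero_of_uIcc hc hd
  have h0 : (0:ℝ) ∉ [[c, d]] := fun h => hne 0 h rfl
  have hint1 : IntervalIntegrable (fun u => (Real.cos u - 1) / u) volume c d :=
    (((Real.continuous_cos.sub continuous_const).continuousOn).div continuousOn_id
      hne).intervalIntegrable
  have hint2 : IntervalIntegrable (fun u : ℝ => 1 / u) volume c d :=
    ((continuousOn_const).div continuousOn_id hne).intervalIntegrable
  rw [← integral_one_div h0, ← intervalIntegral.integral_add hint1 hint2]
  apply intervalIntegral.integral_congr
  intro u hu
  have hu0 : u ≠ 0 := hne u hu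
  show Real.cos u / u = (Real.cos u - 1) / u + 1 / u
  field_simp
  ring

lemma head_err_bound {c d : ℝ} (hc : 0 < c) (hd : 0 < d) :
    |∫ u in c..d, (Real.cos u - 1) / u| ≤ max c d / 2 * |d - c| := by
  rw [← Real.norm_eq_abs (∫ u in c..d, (Real.cos u - 1) / u)]
  apply intervalIntegral.norm_integral_le_of_norm_le_const
  intro u hu
  rw [Set.mem_uIoc] at hu
  have hu0 : 0 < u := by
    rcases hu with ⟨h1, _⟩ | ⟨h1, _⟩
    · exact hc.trans h1
    · exact hd.trans h1
  have hum : u ≤ max c d := by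
    rcases hu with ⟨_, h2⟩ | ⟨_, h2⟩
    · exact h2.trans (le_max_right c d)
    · exact h2.trans (le_max_left c d)
  rw [Real.norm_eq_abs, abs_div, abs_of_pos hu0]
  rw [div_le_iff₀ hu0]
  calc |Real.cos u - 1| ≤ u ^ 2 / 2 := one_sub_cos_abs_le u
    _ = (u / 2) * u := by ring
    _ ≤ (max c d / 2) * u := by gcongr

lemma cosdiv_abs_le_log {c d : ℝ} (hc : 0 < c) (hd : 0 < d) :
    |∫ u in c..d, Real.cos u / u| ≤ |Real.log (d / c)| := by
  have hne := ne_zero_of_uIcc hc hd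
  have h0 : (0:ℝ) ∉ [[c, d]] := fun h => hne 0 h rfl
  have hint2 : IntervalIntegrable (fun u : ℝ => 1 / u) volume c d :=
    ((continuousOn_const).div continuousOn_id hne).intervalIntegrable
  rw [← integral_one_div h0, ← Real.norm_eq_abs (∫ u in c..d, Real.cos u / u)]
  apply intervalIntegral.norm_integral_le_abs_of_norm_le _ hint2
  filter_upwards [ae_restrict_mem measurableSet_uIoc] with u hu
  have hu0 : 0 < u := by
    rcases Set.mem_uIoc.1 hu with ⟨h1, _⟩ | ⟨h1, _⟩
    · exact hc.trans h1
    · exact hd.trans h1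
  rw [Real.norm_eq_abs, abs_div, abs_of_pos hu0]
  gcongr
  · exact Real.abs_cos_le_one u

lemma phi_decomp {b ε N : ℝ} (hb : 0 < b) (hε : 0 < ε) (hN : 0 < N) :
    ∫ r in ε..N, (Real.cos (b*r) - Real.cos r)/r
      = (∫ u in b*ε..ε, Real.cos u/u) + ∫ u in N..b*N, Real.cos u/u := by
  have hbε : 0 < b*ε := by positivity
  have hbN : 0 < b*N := by positivity
  have gInt : ∀ x y : ℝ, 0 < x → 0 < y →
      IntervalIntegrable (fun u => Real.cos u/u) volume x y :=
    fun x y hx hy => cos_div_intervalIntegrable hx hy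
  have h1 : ∫ r in ε..N, Real.cos (b*r)/r = ∫ u in b*ε..b*N, Real.cos u/u := by
    have e1 : ∀ r : ℝ, Real.cos (b*r)/r = b * ((fun u => Real.cos u / u) (b*r)) := by
      intro r
      by_cases hr : r = 0
      · simp [hr]
      · show Real.cos (b*r)/r = b * (Real.cos (b*r) / (b*r))
        field_simp
    rw [show (fun r => Real.cos (b*r)/r) = fun r => b * ((fun u => Real.cos u/u) (b*r))
        from funext e1]
    rw [intervalIntegral.integral_const_mul,
      intervalIntegral.integral_comp_mul_left (fun u => Real.cos u/u) hb.ne',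
      smul_eq_mul, ← mul_assoc, mul_inv_cancel₀ hb.ne', one_mul]
  have intA : IntervalIntegrable (fun r => Real.cos (b*r)/r) volume ε N :=
    (((Real.continuous_cos.comp (continuous_const.mul continuous_id)).continuousOn).div
      continuousOn_id (ne_zero_of_uIcc hε hN)).intervalIntegrable
  have h2 : ∫ r in ε..N, (Real.cos (b*r) - Real.cos r)/r
      = (∫ r in ε..N, Real.cos (b*r)/r) - ∫ r in ε..N, Real.cos r/r := by
    rw [← intervalIntegral.integral_sub intA (gInt _ _ hε hN)]
    apply intervalIntegral.integral_congr
    intro r _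
    show (Real.cos (b*r) - Real.cos r)/r = Real.cos (b*r)/r - Real.cos r/r
    rw [sub_div]
  have hAB := intervalIntegral.integral_add_adjacent_intervals
    (gInt _ _ hbε hε) (gInt _ _ hε hN)
  have hABC := intervalIntegral.integral_add_adjacent_intervals
    (gInt _ _ hbε hN) (gInt _ _ hN hbN)
  rw [h2, h1]
  linarith [hAB, hABC]

lemma min_rw {b N : ℝ} (hN : 0 ≤ N) : min N (b*N) = min 1 b * N := by
  rw [min_mul_of_nonneg _ _ hN, one_mul]

lemma phi_tendsto {b : ℝ} (hb : 0 < b) :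
    Tendsto (fun p : ℝ × ℝ => ∫ r in p.1..p.2, (Real.cos (b*r) - Real.cos r)/r)
      ((nhdsWithin (0:ℝ) (Ioi 0)) ×ˢ atTop) (𝓝 (-Real.log b)) := by
  rw [← tendsto_sub_nhds_zero_iff]
  have hev : ∀ᶠ p : ℝ×ℝ in (nhdsWithin (0:ℝ) (Ioi 0)) ×ˢ atTop,
      (p.1 ∈ Ioo (0:ℝ) 1 ∧ 1 ≤ p.2) := by
    apply Filter.Eventually.prod_mk
    · have heq : Ioo (0:ℝ) 1 = Iio 1 ∩ Ioi 0 := by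
        ext x; simp [mem_Ioo, and_comm]
      have h1 : Ioo (0:ℝ) 1 ∈ nhdsWithin (0:ℝ) (Ioi 0) := by
        rw [heq]
        exact Filter.inter_mem (nhdsWithin_le_nhds (Iio_mem_nhds one_pos)) self_mem_nhdsWithin
      exact h1
    · exact eventually_ge_atTop 1
  apply squeeze_zero_norm'
    (a := fun p : ℝ×ℝ => (1+b)^2 * p.1^2 + 3 / (min 1 b * p.2))
  · filter_upwards [hev] with p hp
    obtain ⟨⟨hε0, hε1⟩, hN1⟩ := hp
    have hN0 : (0:ℝ) < p.2 := lt_of_lt_of_le one_pos hN1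
    have hbε : 0 < b*p.1 := by positivity
    have hbN : 0 < b*p.2 := by positivity
    rw [phi_decomp hb hε0 hN0, head_eq hbε hε0]
    have hlog : Real.log (p.1/(b*p.1)) = -Real.log b := by
      rw [show p.1/(b*p.1) = b⁻¹ by field_simp, Real.log_inv]
    rw [hlog]
    have e1 : |∫ u in b*p.1..p.1, (Real.cos u - 1)/u| ≤ (1+b)^2*p.1^2 := by
      have h := head_err_bound hbε hε0
      have hmax : max (b*p.1) p.1 ≤ (1+b)*p.1 := by
        apply max_le <;> nlinarith
      have habs : |p.1 - b*p.1| ≤ (1+b)*p.1 := by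
        rw [abs_le]; constructor <;> nlinarith
      calc |∫ u in b*p.1..p.1, (Real.cos u - 1)/u|
          ≤ max (b*p.1) p.1 / 2 * |p.1 - b*p.1| := h
        _ ≤ ((1+b)*p.1/2) * ((1+b)*p.1) := by
            gcongr
        _ ≤ (1+b)^2*p.1^2 := by nlinarith
    have e2 : |∫ u in p.2..b*p.2, Real.cos u/u| ≤ 3/(min 1 b * p.2) := by
      have h := tail_bound' hN0 hbN
      rwa [min_rw hN0.le] at h
    rw [Real.norm_eq_abs]
    have hre : (∫ u in b*p.1..p.1, (Real.cos u - 1)/u) + -Real.log b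
        + (∫ u in p.2..b*p.2, Real.cos u/u) - -Real.log b
        = (∫ u in b*p.1..p.1, (Real.cos u - 1)/u) + (∫ u in p.2..b*p.2, Real.cos u/u) := by
      ring
    rw [hre]
    calc |(∫ u in b*p.1..p.1, (Real.cos u - 1)/u) + (∫ u in p.2..b*p.2, Real.cos u/u)|
        ≤ |∫ u in b*p.1..p.1, (Real.cos u - 1)/u| + |∫ u in p.2..b*p.2, Real.cos u/u| :=
          abs_add_le _ _
      _ ≤ _ := add_le_add e1 e2
  · have t1 : Tendsto (fun p : ℝ×ℝ => p.1) ((nhdsWithin (0:ℝ) (Ioi 0)) ×ˢ atTop) (𝓝 0) :=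
      tendsto_fst.mono_right nhdsWithin_le_nhds
    have term1 : Tendsto (fun p : ℝ×ℝ => (1+b)^2 * p.1^2)
        ((nhdsWithin (0:ℝ) (Ioi 0)) ×ˢ atTop) (𝓝 0) := by
      have := (t1.pow 2).const_mul ((1+b)^2)
      simpa using this
    have term2 : Tendsto (fun p : ℝ×ℝ => 3 / (min 1 b * p.2))
        ((nhdsWithin (0:ℝ) (Ioi 0)) ×ˢ atTop) (𝓝 0) := by
      apply Filter.Tendsto.div_atTop (tendsto_const_nhds)
      exact tendsto_snd.const_mul_atTop (lt_min one_pos hb)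
    simpa using term1.add term2

lemma phi_abs_bound {b ε N : ℝ} (hb : 0 < b) (hb1 : b ≤ 1) (hε : 0 < ε) (hε1 : ε ≤ 1)
    (hN : 0 < N) :
    |∫ r in ε..N, (Real.cos (b*r) - Real.cos r)/r| ≤ 2*|Real.log b| + 1 := by
  have hbε : 0 < b*ε := by positivity
  have hbN : 0 < b*N := by positivity
  rw [phi_decomp hb hε hN, head_eq hbε hε]
  have hlog : Real.log (ε/(b*ε)) = -Real.log b := by
    rw [show ε/(b*ε) = b⁻¹ by field_simp, Real.log_inv]
  rw [hlog]
  have e1 : |∫ u in b*ε..ε, (Real.cos u - 1)/u| ≤ 1 := by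
    have h := head_err_bound hbε hε
    have hmax : max (b*ε) ε ≤ 1 := by
      apply max_le <;> nlinarith
    have habs : |ε - b*ε| ≤ 1 := by
      rw [abs_le]; constructor <;> nlinarith
    calc |∫ u in b*ε..ε, (Real.cos u - 1)/u| ≤ max (b*ε) ε / 2 * |ε - b*ε| := h
      _ ≤ (1/2) * 1 := by
          gcongr
      _ ≤ 1 := by norm_num
  have e2 : |∫ u in N..b*N, Real.cos u/u| ≤ |Real.log b| := by
    have h := cosdiv_abs_le_log hN hbN
    rwa [show b*N/N = b by field_simp] at h
  calc |(∫ u in b*ε..ε, (Real.cos u - 1)/u) + -Real.log b + ∫ u in N..b*N, Real.cos u/u|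
      ≤ |(∫ u in b*ε..ε, (Real.cos u - 1)/u) + -Real.log b| + |∫ u in N..b*N, Real.cos u/u| :=
        abs_add_le _ _
    _ ≤ (|∫ u in b*ε..ε, (Real.cos u - 1)/u| + |-Real.log b|) + |∫ u in N..b*N, Real.cos u/u| := by
        gcongr
        exact abs_add_le _ _
    _ ≤ (1 + |Real.log b|) + |Real.log b| := by
        rw [abs_neg]
        exact add_le_add (add_le_add e1 le_rfl) e2
    _ = 2*|Real.log b| + 1 := by ring

lemma neg_log_le_rpow {x : ℝ} (hx : 0 < x) : -Real.log x ≤ 2 * x ^ (-(1:ℝ)/2) := by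
  have h1 : 0 < x ^ (-(1:ℝ)/2) := Real.rpow_pos_of_pos hx _
  have h2 := Real.log_le_sub_one_of_pos h1
  rw [Real.log_rpow hx] at h2
  linarith

lemma intervalIntegrable_log_sin_half :
    IntervalIntegrable (fun x => Real.log (Real.sin x)) volume 0 (π/2) := by
  have hπ : 0 < π := Real.pi_pos
  apply IntervalIntegrable.mono_fun'
    (g := fun x => 2 * x ^ (-(1:ℝ)/2) + Real.log (π/2))
  · exact ((intervalIntegrable_rpow' (by norm_num)).const_mul 2).add intervalIntegrable_const
  · exact ((Real.measurable_log.comp Real.measurable_sin).aestronglyMeasurable).restrict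
  · rw [uIoc_of_le (by positivity : (0:ℝ) ≤ π/2)]
    filter_upwards [ae_restrict_mem measurableSet_Ioc] with x hx
    obtain ⟨hx0, hx2⟩ := hx
    have hxπ : x < π := lt_of_le_of_lt hx2 (by linarith)
    have hs0 : 0 < Real.sin x := Real.sin_pos_of_pos_of_lt_pi hx0 hxπ
    have hs1 : Real.sin x ≤ 1 := Real.sin_le_one x
    have hj : 2/π * x ≤ Real.sin x := Real.mul_le_sin hx0.le hx2
    have hlog1 : Real.log (Real.sin x) ≤ 0 := Real.log_nonpos hs0.le hs1
    rw [Real.norm_eq_abs, abs_of_nonpos hlog1]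
    have h2 : Real.log (2/π * x) ≤ Real.log (Real.sin x) :=
      Real.log_le_log (by positivity) hj
    have h3 : Real.log (2/π * x) = Real.log x - Real.log (π/2) := by
      rw [Real.log_mul (by positivity : (2/π : ℝ) ≠ 0) hx0.ne']
      have : Real.log (2/π) = -Real.log (π/2) := by
        rw [Real.log_div two_ne_zero hπ.ne', Real.log_div hπ.ne' two_ne_zero]
        ring
      rw [this]; ring
    have h4 := neg_log_le_rpow hx0
    linarith

lemma intervalIntegrable_log_sin_pi :
    IntervalIntegrable (fun x => Real.log (Real.sin x)) volume 0 π := by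
  apply IntervalIntegrable.trans (b := π/2) intervalIntegrable_log_sin_half
  have h := (intervalIntegrable_log_sin_half.comp_sub_left π).symm
  simp only [Real.sin_pi_sub, sub_zero] at h
  have e : π - π/2 = π/2 := by ring
  rwa [e] at h

lemma integral_log_sin_symm :
    ∫ x in (π/2)..π, Real.log (Real.sin x) = ∫ x in (0:ℝ)..(π/2), Real.log (Real.sin x) := by
  have := intervalIntegral.integral_comp_sub_left (a := 0) (b := π/2)
    (fun x => Real.log (Real.sin x)) π
  simp only [Real.sin_pi_sub] at this
  rw [this]
  congr 1 <;> ring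

lemma intervalIntegrable_log_sin_half2 :
    IntervalIntegrable (fun x => Real.log (Real.sin x)) volume (π/2) π := by
  have h := (intervalIntegrable_log_sin_half.comp_sub_left π).symm
  simp only [Real.sin_pi_sub, sub_zero] at h
  have e : π - π/2 = π/2 := by ring
  rwa [e] at h

lemma integral_log_sin_pi_eq :
    ∫ x in (0:ℝ)..π, Real.log (Real.sin x)
      = 2 * ∫ x in (0:ℝ)..(π/2), Real.log (Real.sin x) := by
  rw [← intervalIntegral.integral_add_adjacent_intervals intervalIntegrable_log_sin_half
    intervalIntegrable_log_sin_half2, integral_log_sin_symm]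
  ring

lemma integral_log_sin_half_eq :
    ∫ x in (0:ℝ)..(π/2), Real.log (Real.sin x) = -(π/2) * Real.log 2 := by
  set I := ∫ x in (0:ℝ)..(π/2), Real.log (Real.sin x) with hI
  have hπ : 0 < π := Real.pi_pos
  have hcosInt : IntervalIntegrable (fun x => Real.log (Real.cos x)) volume 0 (π/2) := by
    have h := (intervalIntegrable_log_sin_half.comp_sub_left (π/2)).symm
    simp only [Real.sin_pi_div_two_sub] at h
    have e : π/2 - π/2 = 0 := by ring
    rw [e, sub_zero] at h
    exact h
  have hIcos : ∫ x in (0:ℝ)..(π/2), Real.log (Real.cos x) = I := by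
    have h := intervalIntegral.integral_comp_sub_left (a := 0) (b := π/2)
      (fun x => Real.log (Real.sin x)) (π/2)
    simp only [Real.sin_pi_div_two_sub] at h
    rw [h]
    have e : π/2 - π/2 = 0 := by ring
    rw [e, sub_zero, hI]
  have hInt2 : IntervalIntegrable (fun x => Real.log (Real.sin (2*x))) volume 0 (π/2) := by
    have h := intervalIntegrable_log_sin_pi.comp_mul_left (c := 2)
    norm_num at h
    exact h
  have hdouble : ∫ x in (0:ℝ)..(π/2), Real.log (Real.sin (2*x)) = I := by
    have h2 := intervalIntegral.integral_comp_mul_left (a := 0) (b := π/2)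
      (fun x => Real.log (Real.sin x)) (c := 2) two_ne_zero
    rw [h2]
    norm_num
    rw [show (2:ℝ) * (π/2) = π by ring, integral_log_sin_pi_eq]
    rw [← hI]
    ring
  have hsplit : ∫ x in (0:ℝ)..(π/2), (Real.log (Real.sin x) + Real.log (Real.cos x))
      = 2 * I := by
    rw [intervalIntegral.integral_add intervalIntegrable_log_sin_half hcosInt, hIcos, ← hI]
    ring
  have hae : ∀ᵐ x : ℝ ∂volume, x ≠ π/2 := by
    have h0 : volume ({π/2} : Set ℝ) = 0 := measure_singleton _
    rw [ae_iff]
    convert h0 using 2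
    ext x; simp
  have hkey : ∫ x in (0:ℝ)..(π/2), (Real.log (Real.sin x) + Real.log (Real.cos x))
      = ∫ x in (0:ℝ)..(π/2), (Real.log (Real.sin (2*x)) - Real.log 2) := by
    apply intervalIntegral.integral_congr_ae
    filter_upwards [hae] with x hx hmem
    rw [Set.uIoc_of_le (by positivity : (0:ℝ) ≤ π/2)] at hmem
    obtain ⟨h0, h2⟩ := hmem
    have h2' : x < π/2 := lt_of_le_of_ne h2 hx
    have hs : 0 < Real.sin x := Real.sin_pos_of_pos_of_lt_pi h0 (by linarith)
    have hc : 0 < Real.cos x := Real.cos_pos_of_mem_Ioo ⟨by linarith, h2'⟩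
    rw [Real.sin_two_mul, Real.log_mul (by positivity : (2:ℝ) * Real.sin x ≠ 0) hc.ne',
      Real.log_mul two_ne_zero hs.ne']
    ring
  have hrhs : ∫ x in (0:ℝ)..(π/2), (Real.log (Real.sin (2*x)) - Real.log 2)
      = I - (π/2) * Real.log 2 := by
    rw [intervalIntegral.integral_sub hInt2 intervalIntegrable_const, hdouble,
      intervalIntegral.integral_const, smul_eq_mul]
    ring
  have : 2 * I = I - (π/2) * Real.log 2 := by rw [← hsplit, hkey, hrhs]
  linarith

lemma J0_sub_cos_div {t : ℝ} (ht : t ≠ 0) :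
    (J0 t - Real.cos t)/t
      = (2/π) * ∫ θ in (0:ℝ)..(π/2), (Real.cos (Real.sin θ * t) - Real.cos t)/t := by
  have hc1 : IntervalIntegrable (fun θ => Real.cos (t * Real.sin θ)) volume 0 (π/2) :=
    (by fun_prop : Continuous fun θ => Real.cos (t * Real.sin θ)).intervalIntegrable _ _
  have h1 : ∫ θ in (0:ℝ)..(π/2), (Real.cos (Real.sin θ * t) - Real.cos t)/t
      = ((∫ θ in (0:ℝ)..(π/2), Real.cos (t * Real.sin θ)) - (π/2) * Real.cos t) / t := by
    rw [intervalIntegral.integral_div]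
    congr 1
    rw [intervalIntegral.integral_sub
      ((by fun_prop : Continuous fun θ => Real.cos (Real.sin θ * t)).intervalIntegrable _ _)
      (intervalIntegrable_const)]
    congr 1
    · apply intervalIntegral.integral_congr
      intro θ _
      show Real.cos (Real.sin θ * t) = Real.cos (t * Real.sin θ)
      rw [mul_comm]
    · rw [intervalIntegral.integral_const, smul_eq_mul]
      ring
  rw [h1, J0_repr]
  have hπ := Real.pi_ne_zero
  field_simp

lemma G_tendsto :
    Tendsto (fun p : ℝ × ℝ => ∫ t in p.1..p.2, (J0 t - Real.cos t)/t)
      ((nhdsWithin (0:ℝ) (Ioi 0)) ×ˢ atTop) (𝓝 (Real.log 2)) := by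
  set l := (nhdsWithin (0:ℝ) (Ioi 0)) ×ˢ (atTop : Filter ℝ) with hl
  have hev : ∀ᶠ p : ℝ×ℝ in l, (p.1 ∈ Ioo (0:ℝ) 1 ∧ 1 ≤ p.2) := by
    apply Filter.Eventually.prod_mk
    · have heq : Ioo (0:ℝ) 1 = Iio 1 ∩ Ioi 0 := by
        ext x; simp [mem_Ioo, and_comm]
      have h1 : Ioo (0:ℝ) 1 ∈ nhdsWithin (0:ℝ) (Ioi 0) := by
        rw [heq]
        exact Filter.inter_mem (nhdsWithin_le_nhds (Iio_mem_nhds one_pos)) self_mem_nhdsWithin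
      exact h1
    · exact eventually_ge_atTop 1
  -- the DCT step
  have hDCT : Tendsto (fun p : ℝ×ℝ => ∫ θ in Ioc (0:ℝ) (π/2),
        ∫ t in p.1..p.2, (Real.cos (Real.sin θ * t) - Real.cos t)/t) l
      (𝓝 (∫ θ in Ioc (0:ℝ) (π/2), -Real.log (Real.sin θ))) := by
    apply MeasureTheory.tendsto_integral_filter_of_dominated_convergence
      (bound := fun θ => 2*|Real.log (Real.sin θ)| + 1)
    · -- measurability, eventually
      filter_upwards [hev] with p hp
      obtain ⟨⟨hε0, hε1⟩, hN1⟩ := hp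
      have hεN : p.1 ≤ p.2 := by linarith
      have hcont : Continuous fun θ : ℝ =>
          ∫ t in p.1..p.2, (Real.cos (Real.sin θ * max t (p.1/2)) - Real.cos (max t (p.1/2)))
            / max t (p.1/2) := by
        apply intervalIntegral.continuous_parametric_intervalIntegral_of_continuous'
          (f := fun θ t => (Real.cos (Real.sin θ * max t (p.1/2)) - Real.cos (max t (p.1/2)))
            / max t (p.1/2))
        apply Continuous.div
        · fun_prop
        · fun_prop
        · intro q
          exact (lt_of_lt_of_le (by positivity) (le_max_right _ _)).ne'
      have hfun : (fun θ : ℝ => ∫ t in p.1..p.2, (Real.cos (Real.sin θ * t) - Real.cos t)/t)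
          = fun θ : ℝ => ∫ t in p.1..p.2,
              (Real.cos (Real.sin θ * max t (p.1/2)) - Real.cos (max t (p.1/2))) / max t (p.1/2) := by
        funext θ
        apply intervalIntegral.integral_congr
        intro t htm
        rw [Set.uIcc_of_le hεN] at htm
        have hm : max t (p.1/2) = t := max_eq_left (by linarith [htm.1])
        show (Real.cos (Real.sin θ * t) - Real.cos t)/t
          = (Real.cos (Real.sin θ * max t (p.1/2)) - Real.cos (max t (p.1/2))) / max t (p.1/2)
        rw [hm]
      rw [hfun]
      exact hcont.aestronglyMeasurable.restrict
    · -- bound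
      filter_upwards [hev] with p hp
      obtain ⟨⟨hε0, hε1⟩, hN1⟩ := hp
      filter_upwards [ae_restrict_mem measurableSet_Ioc] with θ hθ
      obtain ⟨hθ0, hθ2⟩ := hθ
      have hs0 : 0 < Real.sin θ := Real.sin_pos_of_pos_of_lt_pi hθ0 (by linarith [Real.pi_pos])
      have hs1 : Real.sin θ ≤ 1 := Real.sin_le_one θ
      have hb := phi_abs_bound hs0 hs1 hε0 hε1.le (lt_of_lt_of_le one_pos hN1)
      rw [Real.norm_eq_abs]
      exact hb.trans (by norm_num)
    · -- bound integrable
      have h1 : IntervalIntegrable (fun θ => 2*|Real.log (Real.sin θ)| + 1) volume 0 (π/2) :=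
        ((intervalIntegrable_log_sin_half.abs).const_mul 2).add intervalIntegrable_const
      have h2 := h1.def'
      rwa [Set.uIoc_of_le (by positivity : (0:ℝ) ≤ π/2)] at h2
    · -- pointwise limit
      filter_upwards [ae_restrict_mem measurableSet_Ioc] with θ hθ
      obtain ⟨hθ0, hθ2⟩ := hθ
      have hs0 : 0 < Real.sin θ := Real.sin_pos_of_pos_of_lt_pi hθ0 (by linarith [Real.pi_pos])
      exact phi_tendsto hs0
  have hval : ∫ θ in Ioc (0:ℝ) (π/2), -Real.log (Real.sin θ) = (π/2) * Real.log 2 := by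
    rw [MeasureTheory.integral_neg, ← intervalIntegral.integral_of_le
      (by positivity : (0:ℝ) ≤ π/2), integral_log_sin_half_eq]
    ring
  rw [hval] at hDCT
  have hmain := hDCT.const_mul (2/π)
  have hπ := Real.pi_ne_zero
  have hval2 : (2/π) * ((π/2) * Real.log 2) = Real.log 2 := by field_simp
  rw [hval2] at hmain
  refine Filter.Tendsto.congr' ?_ hmain
  -- eventual equality
  filter_upwards [hev] with p hp
  obtain ⟨⟨hε0, hε1⟩, hN1⟩ := hp
  symm
  have hεN : p.1 ≤ p.2 := by linarith
  have hpos : ∀ t ∈ [[p.1, p.2]], t ≠ 0 := ne_zero_of_uIcc hε0 (lt_of_lt_of_le one_pos hN1)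
  -- Fubini
  have hswap : ∫ t in Ioc p.1 p.2, ∫ θ in Ioc (0:ℝ) (π/2),
        (Real.cos (Real.sin θ * t) - Real.cos t)/t
      = ∫ θ in Ioc (0:ℝ) (π/2), ∫ t in Ioc p.1 p.2,
        (Real.cos (Real.sin θ * t) - Real.cos t)/t := by
    apply MeasureTheory.integral_integral_swap
    rw [MeasureTheory.Measure.prod_restrict]
    have hKc : IsCompact (Icc p.1 p.2 ×ˢ Icc (0:ℝ) (π/2)) := isCompact_Icc.prod isCompact_Icc
    have hco : ContinuousOn (Function.uncurry fun t θ =>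
        (Real.cos (Real.sin θ * t) - Real.cos t)/t) (Icc p.1 p.2 ×ˢ Icc (0:ℝ) (π/2)) := by
      apply ContinuousOn.div
      · fun_prop
      · fun_prop
      · rintro ⟨t, θ⟩ ⟨ht, _⟩
        exact (lt_of_lt_of_le hε0 ht.1).ne'
    have hint : IntegrableOn (Function.uncurry fun t θ =>
        (Real.cos (Real.sin θ * t) - Real.cos t)/t)
        (Icc p.1 p.2 ×ˢ Icc (0:ℝ) (π/2)) (volume.prod volume) :=
      hco.integrableOn_compact hKc
    exact hint.mono_set (Set.prod_mono Ioc_subset_Icc_self Ioc_subset_Icc_self)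
  calc ∫ t in p.1..p.2, (J0 t - Real.cos t)/t
      = ∫ t in p.1..p.2, (2/π) * ∫ θ in (0:ℝ)..(π/2),
          (Real.cos (Real.sin θ * t) - Real.cos t)/t := by
        apply intervalIntegral.integral_congr
        intro t htm
        exact J0_sub_cos_div (hpos t htm)
    _ = (2/π) * ∫ t in p.1..p.2, ∫ θ in (0:ℝ)..(π/2),
          (Real.cos (Real.sin θ * t) - Real.cos t)/t := by
        rw [intervalIntegral.integral_const_mul]
    _ = (2/π) * ∫ t in Ioc p.1 p.2, ∫ θ in Ioc (0:ℝ) (π/2),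
          (Real.cos (Real.sin θ * t) - Real.cos t)/t := by
        rw [intervalIntegral.integral_of_le hεN]
        congr 1
        apply MeasureTheory.setIntegral_congr_fun measurableSet_Ioc
        intro t _
        show (∫ θ in (0:ℝ)..(π/2), (Real.cos (Real.sin θ * t) - Real.cos t)/t)
          = ∫ θ in Ioc (0:ℝ) (π/2), (Real.cos (Real.sin θ * t) - Real.cos t)/t
        rw [intervalIntegral.integral_of_le (by positivity : (0:ℝ) ≤ π/2)]
    _ = (2/π) * ∫ θ in Ioc (0:ℝ) (π/2), ∫ t in Ioc p.1 p.2,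
          (Real.cos (Real.sin θ * t) - Real.cos t)/t := by rw [hswap]
    _ = (2/π) * ∫ θ in Ioc (0:ℝ) (π/2), ∫ t in p.1..p.2,
          (Real.cos (Real.sin θ * t) - Real.cos t)/t := by
        congr 1
        apply MeasureTheory.setIntegral_congr_fun measurableSet_Ioc
        intro θ _
        show (∫ t in Ioc p.1 p.2, (Real.cos (Real.sin θ * t) - Real.cos t)/t)
          = ∫ t in p.1..p.2, (Real.cos (Real.sin θ * t) - Real.cos t)/t
        rw [intervalIntegral.integral_of_le hεN]

/-- For every `a > 0`, `∫₀^∞ (J₀(ar) − cos r)/r dr = ln(2/a)`, the integral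
understood as `lim_{ε→0⁺, N→∞} ∫_ε^N`. -/
theorem integral_J0_sub_cos (a : ℝ) (ha : 0 < a) :
    Tendsto (fun p : ℝ × ℝ => ∫ r in p.1..p.2, (J0 (a * r) - Real.cos r) / r)
      ((nhdsWithin 0 (Ioi 0)) ×ˢ atTop) (𝓝 (Real.log (2 / a))) := by
  have hmul0 : Tendsto (fun x : ℝ => a*x) (nhdsWithin (0:ℝ) (Ioi 0))
      (nhdsWithin (0:ℝ) (Ioi 0)) := by
    refine Filter.Tendsto.inf ?_ (tendsto_principal_principal.2 (fun x hx => mul_pos ha hx))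
    have h := (continuous_mul_left a).tendsto (0:ℝ)
    simpa using h
  have hmulT : Tendsto (fun x : ℝ => a*x) atTop atTop :=
    Tendsto.const_mul_atTop ha tendsto_id
  have hmap : Tendsto (fun p : ℝ×ℝ => (a*p.1, a*p.2))
      ((nhdsWithin (0:ℝ) (Ioi 0)) ×ˢ atTop) ((nhdsWithin (0:ℝ) (Ioi 0)) ×ˢ atTop) :=
    (hmul0.comp tendsto_fst).prodMk (hmulT.comp tendsto_snd)
  have h1 := G_tendsto.comp hmap
  have h2 := phi_tendsto ha
  have h3 := h1.add h2
  have hval : Real.log 2 + -Real.log a = Real.log (2/a) := by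
    rw [Real.log_div two_ne_zero ha.ne']; ring
  rw [hval] at h3
  refine Filter.Tendsto.congr' ?_ h3
  have hev : ∀ᶠ p : ℝ×ℝ in (nhdsWithin (0:ℝ) (Ioi 0)) ×ˢ atTop,
      (p.1 ∈ Ioo (0:ℝ) 1 ∧ 1 ≤ p.2) := by
    apply Filter.Eventually.prod_mk
    · have heq : Ioo (0:ℝ) 1 = Iio 1 ∩ Ioi 0 := by
        ext x; simp [mem_Ioo, and_comm]
      rw [heq]
      exact Filter.inter_mem (nhdsWithin_le_nhds (Iio_mem_nhds one_pos)) self_mem_nhdsWithin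
    · exact eventually_ge_atTop 1
  filter_upwards [hev] with p hp
  obtain ⟨⟨hε0, hε1⟩, hN1⟩ := hp
  have hN0 : (0:ℝ) < p.2 := lt_of_lt_of_le one_pos hN1
  have hne := ne_zero_of_uIcc hε0 hN0
  have hsub : ∫ r in p.1..p.2, (J0 (a*r) - Real.cos (a*r))/r
      = ∫ t in a*p.1..a*p.2, (J0 t - Real.cos t)/t := by
    have e1 : ∀ r : ℝ, (J0 (a*r) - Real.cos (a*r))/r
        = a * ((fun u => (J0 u - Real.cos u)/u) (a*r)) := by
      intro r
      by_cases hr : r = 0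
      · simp [hr]
      · show _ = a * ((J0 (a*r) - Real.cos (a*r))/(a*r))
        field_simp
    rw [show (fun r => (J0 (a*r) - Real.cos (a*r))/r)
        = fun r => a * ((fun u => (J0 u - Real.cos u)/u) (a*r)) from funext e1]
    rw [intervalIntegral.integral_const_mul,
      intervalIntegral.integral_comp_mul_left (fun u => (J0 u - Real.cos u)/u) ha.ne',
      smul_eq_mul, ← mul_assoc, mul_inv_cancel₀ ha.ne', one_mul]
  have hintJ : IntervalIntegrable (fun r => (J0 (a*r) - Real.cos (a*r))/r) volume p.1 p.2 :=
    (((J0_continuous.comp (continuous_const.mul continuous_id)).sub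
      (Real.continuous_cos.comp (continuous_const.mul continuous_id))).continuousOn.div
      continuousOn_id hne).intervalIntegrable
  have hintC : IntervalIntegrable (fun r => (Real.cos (a*r) - Real.cos r)/r) volume p.1 p.2 :=
    (((Real.continuous_cos.comp (continuous_const.mul continuous_id)).sub
      Real.continuous_cos).continuousOn.div continuousOn_id hne).intervalIntegrable
  show (∫ t in a*p.1..a*p.2, (J0 t - Real.cos t)/t)
        + (∫ r in p.1..p.2, (Real.cos (a*r) - Real.cos r)/r)
      = ∫ r in p.1..p.2, (J0 (a * r) - Real.cos r)/r
  calc (∫ t in a*p.1..a*p.2, (J0 t - Real.cos t)/t)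
        + ∫ r in p.1..p.2, (Real.cos (a*r) - Real.cos r)/r
      = (∫ r in p.1..p.2, (J0 (a*r) - Real.cos (a*r))/r)
        + ∫ r in p.1..p.2, (Real.cos (a*r) - Real.cos r)/r := by rw [hsub]
    _ = ∫ r in p.1..p.2, ((J0 (a*r) - Real.cos (a*r))/r + (Real.cos (a*r) - Real.cos r)/r) :=
        (intervalIntegral.integral_add hintJ hintC).symm
    _ = ∫ r in p.1..p.2, (J0 (a * r) - Real.cos r)/r := by
        apply intervalIntegral.integral_congr
        intro r _
        show (J0 (a*r) - Real.cos (a*r))/r + (Real.cos (a*r) - Real.cos r)/r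
          = (J0 (a * r) - Real.cos r)/r
        rw [← add_div]
        congr 1
        ring
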